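/- There is an integer q₀ such that for every prime power q ≥ q₀ and the finite field F_q with q elements, the number of caps in the affine plane F_q² (i.e., subsets of F_q² containing no three collinear points) is less than 2^{6q}. -/

import Mathlib

/-- A cap in the affine plane `F²`: a finite set of points no three of which are collinear. -/
def IsCap {F : Type*} [Field F] (S : Finset (F × F)) : Prop :=
  ∀ a ∈ S, ∀ b ∈ S, ∀ c ∈ S, a ≠ b → a ≠ c → b ≠ c →
    ¬Collinear F ({a, b, c} : Set (F × F))

namespace Stmt10Aux

open Finset
open scoped Classical

/-! ### Pure arithmetic lemmas -/

lemma pow5_le : ∀ L : ℕ, 64 ≤ L → (L + 1) ^ 5 ≤ 2 ^ L := by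
  intro L
  induction L with
  | zero => omega
  | succ n ih =>
    intro hL
    rcases Nat.lt_or_ge n 64 with h | h
    · have hn : n = 63 := by omega
      subst hn; norm_num
    · have ih' := ih h
      have key : 64 * (n + 2) ≤ 65 * (n + 1) := by omega
      have k5 : (64 * (n + 2)) ^ 5 ≤ (65 * (n + 1)) ^ 5 := Nat.pow_le_pow_left key 5
      have expand : 64 ^ 5 * (n + 2) ^ 5 ≤ 65 ^ 5 * (n + 1) ^ 5 := by
        rw [mul_pow, mul_pow] at k5; exact k5
      have h2 : 65 ^ 5 * (n + 1) ^ 5 ≤ 64 ^ 5 * (2 * (n + 1) ^ 5) := by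
        rw [← mul_assoc]
        exact Nat.mul_le_mul_right _ (by norm_num)
      have h3 : (n + 2) ^ 5 ≤ 2 * (n + 1) ^ 5 :=
        Nat.le_of_mul_le_mul_left (expand.trans h2) (by norm_num)
      calc (n + 2) ^ 5 ≤ 2 * (n + 1) ^ 5 := h3
        _ ≤ 2 * 2 ^ n := Nat.mul_le_mul_left _ ih'
        _ = 2 ^ (n + 1) := by rw [pow_succ]; ring

lemma bin_ineq (x y : ℕ) : ∀ b : ℕ, x ^ (b + 1) + (b + 1) * y * x ^ b ≤ (x + y) ^ (b + 1) := by
  intro b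
  induction b with
  | zero => simp [pow_one]
  | succ b ih =>
    have expand : (x + y) * (x ^ (b + 1) + (b + 1) * y * x ^ b)
        = x ^ (b + 2) + (b + 2) * y * x ^ (b + 1) + (b + 1) * y ^ 2 * x ^ b := by ring
    calc x ^ (b + 2) + (b + 2) * y * x ^ (b + 1)
        ≤ x ^ (b + 2) + (b + 2) * y * x ^ (b + 1) + (b + 1) * y ^ 2 * x ^ b := Nat.le_add_right _ _
      _ = (x + y) * (x ^ (b + 1) + (b + 1) * y * x ^ b) := expand.symm
      _ ≤ (x + y) * (x + y) ^ (b + 1) := Nat.mul_le_mul_left _ ih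
      _ = (x + y) ^ (b + 2) := by ring

/-! ### Geometry -/

section Main

variable {F : Type} [Field F]

lemma collinear_of_coeffs (p v : F × F) (a b c : F × F) (ra rb rc : F)
    (ha : a = ra • v + p) (hb : b = rb • v + p) (hc : c = rc • v + p) :
    Collinear F ({a, b, c} : Set (F × F)) := by
  rw [collinear_iff_exists_forall_eq_smul_vadd]
  refine ⟨p, v, ?_⟩
  rintro x hx
  simp only [Set.mem_insert_iff, Set.mem_singleton_iff] at hx
  rcases hx with rfl | rfl | rfl
  exacts [⟨ra, by simpa using ha⟩, ⟨rb, by simpa using hb⟩, ⟨rc, by simpa using hc⟩]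

lemma exists_coeff_of_collinear {u w t : F × F} (huw : u ≠ w)
    (h : Collinear F ({u, w, t} : Set (F × F))) :
    ∃ c : F, t = c • (w - u) + u := by
  rw [collinear_iff_of_mem (Set.mem_insert u {w, t})] at h
  obtain ⟨v, hv⟩ := h
  obtain ⟨s, hws⟩ := hv w (by simp)
  obtain ⟨r, hts⟩ := hv t (by simp)
  rw [vadd_eq_add] at hws hts
  have hs : s ≠ 0 := by
    rintro rfl
    rw [zero_smul, zero_add] at hws
    exact huw hws.symm
  have hwv : s • v = w - u := by rw [hws]; abel
  have hrs : (r / s) * s = r := div_mul_cancel₀ r hs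
  refine ⟨r / s, ?_⟩
  rw [hts, ← hwv, smul_smul, hrs]

noncomputable def slp (t c : F × F) : Option F :=
  if c.1 = t.1 then none else some ((c.2 - t.2) / (c.1 - t.1))

lemma collinear_of_slp_eq {t c c' : F × F} (h : slp t c = slp t c') :
    Collinear F ({c, c', t} : Set (F × F)) := by
  have hrot : ({c, c', t} : Set (F × F)) = {t, c, c'} := by
    ext x; simp only [Set.mem_insert_iff, Set.mem_singleton_iff]; tauto
  rw [hrot]
  by_cases h1 : c.1 = t.1
  · have h2 : c'.1 = t.1 := by
      by_contra h2
      simp [slp, h1, h2] at h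
    refine collinear_of_coeffs t (0, 1) t c c' 0 (c.2 - t.2) (c'.2 - t.2) (by simp) ?_ ?_
    · apply Prod.ext <;> simp [h1]
    · apply Prod.ext <;> simp [h2]
  · have h2 : ¬ c'.1 = t.1 := by
      by_contra h2
      simp [slp, h1, h2] at h
    have hs : (c.2 - t.2) / (c.1 - t.1) = (c'.2 - t.2) / (c'.1 - t.1) := by
      simpa [slp, h1, h2] using h
    refine collinear_of_coeffs t (1, (c.2 - t.2) / (c.1 - t.1)) t c c' 0 (c.1 - t.1)
      (c'.1 - t.1) (by simp) ?_ ?_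
    · have hm : (c.1 - t.1) * ((c.2 - t.2) / (c.1 - t.1)) = c.2 - t.2 :=
        mul_div_cancel₀ _ (sub_ne_zero.mpr h1)
      apply Prod.ext <;> simp [hm] <;> ring
    · have hm : (c'.1 - t.1) * ((c'.2 - t.2) / (c'.1 - t.1)) = c'.2 - t.2 :=
        mul_div_cancel₀ _ (sub_ne_zero.mpr h2)
      apply Prod.ext <;> simp [hs, hm] <;> ring

lemma card_pivots_le_two {T : Finset (F × F)} (hT : IsCap T) {u w : F × F} (huw : u ≠ w)
    (hu : u ∉ T) (hw : w ∉ T) :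
    (T.filter fun t => Collinear F ({u, w, t} : Set (F × F))).card ≤ 2 := by
  by_contra hc
  push_neg at hc
  rw [Finset.two_lt_card_iff] at hc
  obtain ⟨t₁, t₂, t₃, h₁, h₂, h₃, h12, h13, h23⟩ := hc
  rw [Finset.mem_filter] at h₁ h₂ h₃
  obtain ⟨c₁, e₁⟩ := exists_coeff_of_collinear huw h₁.2
  obtain ⟨c₂, e₂⟩ := exists_coeff_of_collinear huw h₂.2
  obtain ⟨c₃, e₃⟩ := exists_coeff_of_collinear huw h₃.2
  exact hT t₁ h₁.1 t₂ h₂.1 t₃ h₃.1 h12 h13 h23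
    (collinear_of_coeffs u (w - u) t₁ t₂ t₃ c₁ c₂ c₃ e₁ e₂ e₃)

lemma cap_subset {A T : Finset (F × F)} (hA : IsCap A) (h : T ⊆ A) : IsCap T :=
  fun a ha b hb c hc hab hac hbc => hA a (h ha) b (h hb) c (h hc) hab hac hbc

/-! ### The peeling algorithm -/

variable [Fintype F] [LinearOrder (F × F)]

noncomputable def nbrs (T C : Finset (F × F)) (v : F × F) : Finset (F × F) :=
  C.filter fun w => w ≠ v ∧ ∃ t ∈ T, Collinear F ({v, w, t} : Set (F × F))

noncomputable def deg (T C : Finset (F × F)) (v : F × F) : ℕ := (nbrs T C v).card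

noncomputable def pick (T C : Finset (F × F)) : F × F :=
  if h : C.Nonempty then
    (C.filter fun v => ∀ w ∈ C, deg T C w ≤ deg T C v).min' (by
      obtain ⟨v, hv, hmax⟩ := C.exists_max_image (deg T C) h
      exact ⟨v, Finset.mem_filter.mpr ⟨hv, hmax⟩⟩)
  else (0, 0)

lemma pick_spec {T C : Finset (F × F)} (h : C.Nonempty) :
    pick T C ∈ C ∧ ∀ w ∈ C, deg T C w ≤ deg T C (pick T C) := by
  rw [pick, dif_pos h]
  have hmem := Finset.min'_mem (C.filter fun v => ∀ w ∈ C, deg T C w ≤ deg T C v) (by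
      obtain ⟨v, hv, hmax⟩ := C.exists_max_image (deg T C) h
      exact ⟨v, Finset.mem_filter.mpr ⟨hv, hmax⟩⟩)
  rw [Finset.mem_filter] at hmem
  exact hmem

noncomputable def run (q : ℕ) (T M : Finset (F × F)) :
    ℕ → Finset (F × F) → Finset (F × F) × Finset (F × F)
  | 0, C => (∅, C)
  | n + 1, C =>
    if C.card ≤ 4 * q then (∅, C)
    else if pick T C ∈ M then
      (insert (pick T C) (run q T M n ((C.erase (pick T C)) \ nbrs T C (pick T C))).1,
        (run q T M n ((C.erase (pick T C)) \ nbrs T C (pick T C))).2)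
    else run q T M n (C.erase (pick T C))

lemma run_fst_subset (q : ℕ) (T M : Finset (F × F)) :
    ∀ n C, (run q T M n C).1 ⊆ M := by
  intro n
  induction n with
  | zero => intro C; simp [run]
  | succ n ih =>
    intro C
    rw [run]
    split_ifs with h1 h2
    · simp
    · intro x hx
      rcases Finset.mem_insert.mp hx with rfl | hx
      · exact h2
      · exact ih _ hx
    · exact ih _

lemma run_snd_card (q : ℕ) (T M : Finset (F × F)) :
    ∀ n C, C.card ≤ n → (run q T M n C).2.card ≤ 4 * q := by
  intro n
  induction n with
  | zero =>
    intro C hC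
    simp only [run]
    omega
  | succ n ih =>
    intro C hC
    rw [run]
    split_ifs with h1 h2
    · exact h1
    · apply ih
      have hv : pick T C ∈ C := (pick_spec (Finset.card_pos.mp (by omega))).1
      have : ((C.erase (pick T C)) \ nbrs T C (pick T C)).card ≤ (C.erase (pick T C)).card :=
        Finset.card_le_card (Finset.sdiff_subset)
      have h2 := Finset.card_erase_of_mem hv
      omega
    · apply ih
      have hv : pick T C ∈ C := (pick_spec (Finset.card_pos.mp (by omega))).1
      have h2 := Finset.card_erase_of_mem hv
      omega

lemma run_congr (q : ℕ) (T : Finset (F × F)) :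
    ∀ n C (M M' : Finset (F × F)), (∀ x ∈ C, (x ∈ M ↔ x ∈ M')) →
      run q T M n C = run q T M' n C := by
  intro n
  induction n with
  | zero => intro C M M' _; simp [run]
  | succ n ih =>
    intro C M M' h
    rw [run, run]
    by_cases h1 : C.card ≤ 4 * q
    · rw [if_pos h1, if_pos h1]
    · rw [if_neg h1, if_neg h1]
      have hv : pick T C ∈ C := (pick_spec (Finset.card_pos.mp (by omega))).1
      have hiff := h _ hv
      by_cases h2 : pick T C ∈ M
      · rw [if_pos h2, if_pos (hiff.mp h2)]
        have := ih ((C.erase (pick T C)) \ nbrs T C (pick T C)) M M' (fun x hx =>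
          h x (Finset.mem_of_mem_erase (Finset.mem_sdiff.mp hx).1))
        rw [this]
      · rw [if_neg h2, if_neg (fun hm => h2 (hiff.mpr hm))]
        exact ih _ M M' (fun x hx => h x (Finset.mem_of_mem_erase hx))

lemma run_replay (q : ℕ) (T : Finset (F × F)) :
    ∀ n C (M : Finset (F × F)), run q T (run q T M n C).1 n C = run q T M n C := by
  intro n
  induction n with
  | zero => intro C M; simp [run]
  | succ n ih =>
    intro C M
    by_cases h1 : C.card ≤ 4 * q
    · have hR : run q T M (n + 1) C = (∅, C) := by rw [run, if_pos h1]
      rw [hR]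
      rw [run, if_pos h1]
    · have hv : pick T C ∈ C := (pick_spec (Finset.card_pos.mp (by omega))).1
      by_cases h2 : pick T C ∈ M
      · set C₁ := (C.erase (pick T C)) \ nbrs T C (pick T C) with hC₁
        have hR : run q T M (n + 1) C =
            (insert (pick T C) (run q T M n C₁).1, (run q T M n C₁).2) := by
          rw [run, if_neg h1, if_pos h2]
        rw [hR]
        rw [run, if_neg h1, if_pos (Finset.mem_insert_self _ _)]
        have hvn : pick T C ∉ C₁ := by
          intro hx
          exact (Finset.mem_erase.mp (Finset.mem_sdiff.mp hx).1).1 rfl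
        have hagree : run q T (insert (pick T C) (run q T M n C₁).1) n C₁
            = run q T (run q T M n C₁).1 n C₁ := by
          apply run_congr
          intro x hx
          rw [Finset.mem_insert]
          constructor
          · rintro (rfl | hxx)
            · exact absurd hx hvn
            · exact hxx
          · exact fun hxx => Or.inr hxx
        have hrep : run q T (run q T M n C₁).1 n C₁ = run q T M n C₁ := ih C₁ M
        rw [hagree, hrep]
      · have hR : run q T M (n + 1) C = run q T M n (C.erase (pick T C)) := by
          rw [run, if_neg h1, if_neg h2]
        rw [hR]
        have hvS : pick T C ∉ (run q T M n (C.erase (pick T C))).1 :=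
          fun hm => h2 (run_fst_subset q T M n _ hm)
        rw [run, if_neg h1, if_neg hvS]
        exact ih _ M

lemma run_cover (q : ℕ) {T A : Finset (F × F)} (hA : IsCap A) (hTA : T ⊆ A) :
    ∀ n C, (∀ x ∈ C, x ∉ T) →
      A ∩ C ⊆ (run q T A n C).1 ∪ (run q T A n C).2 := by
  intro n
  induction n with
  | zero =>
    intro C _
    simp only [run]
    exact (Finset.inter_subset_right).trans (Finset.subset_union_right)
  | succ n ih =>
    intro C hdisj
    rw [run]
    split_ifs with h1 h2
    · exact (Finset.inter_subset_right).trans (Finset.subset_union_right)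
    · -- pick ∈ A
      have hv : pick T C ∈ C := (pick_spec (Finset.card_pos.mp (by omega))).1
      intro x hx
      rw [Finset.mem_inter] at hx
      by_cases hxv : x = pick T C
      · subst hxv
        exact Finset.mem_union_left _ (Finset.mem_insert_self _ _)
      · have hxe : x ∈ C.erase (pick T C) := Finset.mem_erase.mpr ⟨hxv, hx.2⟩
        have hxn : x ∉ nbrs T C (pick T C) := by
          intro hn
          rw [nbrs, Finset.mem_filter] at hn
          obtain ⟨hxC, hxv', t, htT, hcol⟩ := hn
          have hvT : pick T C ∉ T := hdisj _ hv
          have hxT : x ∉ T := hdisj _ hxC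
          exact hA (pick T C) h2 x hx.1 t (hTA htT)
            (fun he => hxv he.symm) (fun he => hvT (he ▸ htT)) (fun he => hxT (he ▸ htT)) hcol
        have hx₁ : x ∈ A ∩ ((C.erase (pick T C)) \ nbrs T C (pick T C)) :=
          Finset.mem_inter.mpr ⟨hx.1, Finset.mem_sdiff.mpr ⟨hxe, hxn⟩⟩
        have := ih _ (fun y hy => hdisj y
          (Finset.mem_of_mem_erase (Finset.mem_sdiff.mp hy).1)) hx₁
        rcases Finset.mem_union.mp this with h | h
        · exact Finset.mem_union_left _ (Finset.mem_insert_of_mem h)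
        · exact Finset.mem_union_right _ h
    · -- pick ∉ A
      intro x hx
      rw [Finset.mem_inter] at hx
      have hxv : x ≠ pick T C := by
        rintro rfl
        exact h2 hx.1
      have hxe : x ∈ C.erase (pick T C) := Finset.mem_erase.mpr ⟨hxv, hx.2⟩
      exact ih _ (fun y hy => hdisj y (Finset.mem_of_mem_erase hy))
        (Finset.mem_inter.mpr ⟨hx.1, hxe⟩)

/-! ### The degree lower bound -/

lemma degree_lemma (q : ℕ) (hq : Fintype.card F = q) {T C : Finset (F × F)} (hT : IsCap T)
    (hdisj : ∀ x ∈ C, x ∉ T) (hbig : 4 * q < C.card) :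
    T.card * C.card ≤ 4 * (q + 1) * deg T C (pick T C) := by
  have hq1 : 1 ≤ q := hq ▸ Fintype.card_pos
  have hne : C.Nonempty := Finset.card_pos.mp (by omega)
  obtain ⟨hpm, hpmax⟩ := pick_spec (T := T) hne
  set n := C.card with hn
  set EP := (C ×ˢ C).filter
    (fun p => p.1 ≠ p.2 ∧ ∃ t ∈ T, Collinear F ({p.1, p.2, t} : Set (F × F))) with hEP
  -- Claim A: each pivot sees many pairs
  have clA : ∀ t ∈ T, n * n ≤ 2 * (q + 1) *
      (EP.filter fun p => Collinear F ({p.1, p.2, t} : Set (F × F))).card := by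
    intro t ht
    set x := fun s : Option F => (C.filter (fun c => slp t c = s)).card with hx
    have ha : C.card = ∑ s ∈ (Finset.univ : Finset (Option F)), x s :=
      Finset.card_eq_sum_card_fiberwise (fun c _ => Finset.mem_univ (slp t c))
    set SF := (C ×ˢ C).filter (fun p => p.1 ≠ p.2 ∧ slp t p.1 = slp t p.2) with hSF
    -- fiberwise count of SF
    have hb : SF.card + n = ∑ s ∈ (Finset.univ : Finset (Option F)), x s * x s := by
      have hbf : SF.card = ∑ s ∈ (Finset.univ : Finset (Option F)),
          (SF.filter (fun p => slp t p.1 = s)).card :=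
        Finset.card_eq_sum_card_fiberwise (fun p _ => Finset.mem_univ _)
      have hfib : ∀ s : Option F,
          (SF.filter (fun p => slp t p.1 = s)).card + x s = x s * x s := by
        intro s
        set Cs := C.filter (fun c => slp t c = s) with hCs
        have hset : SF.filter (fun p => slp t p.1 = s)
            = (Cs ×ˢ Cs).filter (fun p => p.1 ≠ p.2) := by
          ext p
          simp only [hSF, hCs, Finset.mem_filter, Finset.mem_product]
          constructor
          · rintro ⟨⟨⟨h1, h2⟩, h3, h4⟩, h5⟩
            exact ⟨⟨⟨h1, h5⟩, h2, h4 ▸ h5⟩, h3⟩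
          · rintro ⟨⟨⟨h1, h5⟩, h2, h6⟩, h3⟩
            exact ⟨⟨⟨h1, h2⟩, h3, h5.trans h6.symm⟩, h5⟩
        have hdiag : (Cs ×ˢ Cs).filter (fun p => ¬ p.1 ≠ p.2)
            = Cs.image (fun c => (c, c)) := by
          ext p
          simp only [Finset.mem_filter, Finset.mem_product, Finset.mem_image, not_not]
          constructor
          · rintro ⟨⟨h1, h2⟩, h3⟩
            exact ⟨p.1, h1, Prod.ext rfl h3⟩
          · rintro ⟨c, hc, rfl⟩
            exact ⟨⟨hc, hc⟩, rfl⟩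
        have hsplit := Finset.card_filter_add_card_filter_not
          (s := Cs ×ˢ Cs) (p := fun p => p.1 ≠ p.2)
        have hdc : ((Cs ×ˢ Cs).filter (fun p => ¬ p.1 ≠ p.2)).card = Cs.card := by
          rw [hdiag]
          exact Finset.card_image_of_injective _ (fun a b hab => (Prod.mk.injEq _ _ _ _).mp hab |>.1)
        rw [hset]
        have hprod : (Cs ×ˢ Cs).card = Cs.card * Cs.card := Finset.card_product _ _
        have hxs : x s = Cs.card := rfl
        rw [hxs]
        omega
      rw [hbf, hn, ha, ← Finset.sum_add_distrib]
      exact Finset.sum_congr rfl (fun s _ => hfib s)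
    have hc : SF ⊆ EP.filter (fun p => Collinear F ({p.1, p.2, t} : Set (F × F))) := by
      intro p hp
      rw [hSF, Finset.mem_filter] at hp
      obtain ⟨hpp, hne', hsl⟩ := hp
      have hcol := collinear_of_slp_eq hsl
      rw [Finset.mem_filter, hEP, Finset.mem_filter]
      exact ⟨⟨hpp, hne', t, ht, hcol⟩, hcol⟩
    -- Cauchy-Schwarz
    have hcard_opt : (Finset.univ : Finset (Option F)).card = q + 1 := by
      rw [Finset.card_univ, Fintype.card_option, hq]
    have hCS : ((n : ℤ)) ^ 2 ≤ (q + 1) * ∑ s ∈ (Finset.univ : Finset (Option F)), (x s : ℤ) ^ 2 := by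
      have := sq_sum_le_card_mul_sum_sq (s := (Finset.univ : Finset (Option F)))
        (f := fun s => (x s : ℤ))
      rw [hcard_opt] at this
      have hsum : ∑ s ∈ (Finset.univ : Finset (Option F)), (x s : ℤ) = (n : ℤ) := by
        rw [hn, ha]; push_cast; rfl
      rw [hsum] at this
      exact_mod_cast this
    have hec : SF.card ≤ (EP.filter fun p => Collinear F ({p.1, p.2, t} : Set (F × F))).card :=
      Finset.card_le_card hc
    -- combine over ℤ
    have hbz : (SF.card : ℤ) + n = ∑ s ∈ (Finset.univ : Finset (Option F)), (x s : ℤ) ^ 2 := by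
      have := congrArg (fun m : ℕ => (m : ℤ)) hb
      push_cast at this
      simpa [sq] using this
    have h2q : 2 * ((q : ℤ) + 1) ≤ (n : ℤ) := by
      have : 4 * q + 1 ≤ n := hbig
      have hq1' : (1 : ℤ) ≤ (q : ℤ) := by exact_mod_cast hq1
      have : (4 * (q : ℤ) + 1) ≤ (n : ℤ) := by exact_mod_cast this
      linarith
    have hgoal : (n : ℤ) * n ≤ 2 * ((q : ℤ) + 1) *
        ((EP.filter fun p => Collinear F ({p.1, p.2, t} : Set (F × F))).card : ℤ) := by
      have hecz : (SF.card : ℤ) ≤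
          ((EP.filter fun p => Collinear F ({p.1, p.2, t} : Set (F × F))).card : ℤ) := by
        exact_mod_cast hec
      have hnn : (0 : ℤ) ≤ (n : ℤ) := by positivity
      nlinarith [hCS, hbz, mul_nonneg (sub_nonneg.mpr h2q) hnn]
    exact_mod_cast hgoal
  -- Claim B: EP counted by degrees
  have clB : EP.card = ∑ v ∈ C, deg T C v := by
    have hf : EP.card = ∑ v ∈ C, (EP.filter (fun p => p.1 = v)).card :=
      Finset.card_eq_sum_card_fiberwise (fun p hp => by
        rw [Finset.mem_coe, hEP, Finset.mem_filter, Finset.mem_product] at hp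
        exact hp.1.1)
    rw [hf]
    apply Finset.sum_congr rfl
    intro v hv
    have hset : EP.filter (fun p => p.1 = v) = (nbrs T C v).image (fun w => (v, w)) := by
      ext p
      simp only [hEP, nbrs, Finset.mem_filter, Finset.mem_product, Finset.mem_image]
      constructor
      · rintro ⟨⟨⟨h1, h2⟩, h3, h4⟩, rfl⟩
        exact ⟨p.2, ⟨h2, fun he => h3 he.symm, h4⟩, rfl⟩
      · rintro ⟨w, ⟨hwC, hwv, hcol⟩, rfl⟩
        exact ⟨⟨⟨hv, hwC⟩, fun he => hwv he.symm, hcol⟩, rfl⟩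
    rw [hset, deg]
    exact Finset.card_image_of_injective _ (fun a b hab => ((Prod.mk.injEq _ _ _ _).mp hab).2)
  -- Claim D: sum over pivots bounded by 2·EP
  have clD : ∑ t ∈ T, (EP.filter fun p => Collinear F ({p.1, p.2, t} : Set (F × F))).card
      ≤ 2 * EP.card := by
    have hswap : ∑ t ∈ T, (EP.filter fun p => Collinear F ({p.1, p.2, t} : Set (F × F))).card
        = ∑ p ∈ EP, (T.filter fun t => Collinear F ({p.1, p.2, t} : Set (F × F))).card := by
      have h1 : ∀ t ∈ T, (EP.filter fun p => Collinear F ({p.1, p.2, t} : Set (F × F))).card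
          = ∑ p ∈ EP, if Collinear F ({p.1, p.2, t} : Set (F × F)) then 1 else 0 :=
        fun t _ => Finset.card_filter _ _
      rw [Finset.sum_congr rfl h1, Finset.sum_comm]
      apply Finset.sum_congr rfl
      intro p _
      exact (Finset.card_filter _ _).symm
    rw [hswap]
    have hb : ∀ p ∈ EP, (T.filter fun t => Collinear F ({p.1, p.2, t} : Set (F × F))).card ≤ 2 := by
      intro p hp
      rw [hEP, Finset.mem_filter, Finset.mem_product] at hp
      exact card_pivots_le_two hT hp.2.1 (hdisj _ hp.1.1) (hdisj _ hp.1.2)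
    calc ∑ p ∈ EP, (T.filter fun t => Collinear F ({p.1, p.2, t} : Set (F × F))).card
        ≤ ∑ _p ∈ EP, 2 := Finset.sum_le_sum hb
      _ = 2 * EP.card := by rw [Finset.sum_const, smul_eq_mul, mul_comm]
  -- Claim C : EP ≤ n * max degree
  have clC : EP.card ≤ n * deg T C (pick T C) := by
    rw [clB]
    calc ∑ v ∈ C, deg T C v ≤ ∑ _v ∈ C, deg T C (pick T C) :=
          Finset.sum_le_sum (fun v hv => hpmax v hv)
      _ = n * deg T C (pick T C) := by rw [Finset.sum_const, smul_eq_mul, hn]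
  -- assemble
  have main : T.card * (n * n) ≤ 4 * (q + 1) * (n * deg T C (pick T C)) := by
    calc T.card * (n * n) = ∑ _t ∈ T, n * n := by rw [Finset.sum_const, smul_eq_mul]
      _ ≤ ∑ t ∈ T, 2 * (q + 1) *
          (EP.filter fun p => Collinear F ({p.1, p.2, t} : Set (F × F))).card :=
            Finset.sum_le_sum clA
      _ = 2 * (q + 1) * ∑ t ∈ T,
          (EP.filter fun p => Collinear F ({p.1, p.2, t} : Set (F × F))).card := by
            rw [Finset.mul_sum]
      _ ≤ 2 * (q + 1) * (2 * EP.card) := Nat.mul_le_mul_left _ clD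
      _ = 4 * (q + 1) * EP.card := by ring
      _ ≤ 4 * (q + 1) * (n * deg T C (pick T C)) := Nat.mul_le_mul_left _ clC
  have hn0 : 0 < n := by omega
  have main' : (T.card * n) * n ≤ (4 * (q + 1) * deg T C (pick T C)) * n := by
    calc (T.card * n) * n = T.card * (n * n) := by ring
      _ ≤ 4 * (q + 1) * (n * deg T C (pick T C)) := main
      _ = (4 * (q + 1) * deg T C (pick T C)) * n := by ring
  exact Nat.le_of_mul_le_mul_right main' hn0

/-! ### Fingerprint size bound -/

lemma run_fingerprint (q : ℕ) (hq : Fintype.card F = q) {T : Finset (F × F)} (hT : IsCap T)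
    (hT4 : T.card ≤ 4 * q) (M : Finset (F × F)) :
    ∀ n C, (∀ x ∈ C, x ∉ T) → ∀ k, k + 1 ≤ (run q T M n C).1.card →
      (4 * q + 1) * (8 * q) ^ k ≤ (8 * q - T.card) ^ k * C.card := by
  intro n
  induction n with
  | zero =>
    intro C _ k hk
    simp [run] at hk
  | succ n ih =>
    intro C hdisj k hk
    rw [run] at hk
    split_ifs at hk with h1 h2
    · simp at hk
    · -- hit step
      have hne : C.Nonempty := Finset.card_pos.mp (by omega)
      have hv : pick T C ∈ C := (pick_spec hne).1
      set v := pick T C with hvdef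
      set C₁ := (C.erase v) \ nbrs T C v with hC₁
      have hk' : k + 1 ≤ (insert v (run q T M n C₁).1).card := hk
      have hdisj₁ : ∀ x ∈ C₁, x ∉ T := fun x hx =>
        hdisj x (Finset.mem_of_mem_erase (Finset.mem_sdiff.mp hx).1)
      have hdeg : T.card * C.card ≤ 4 * (q + 1) * deg T C v :=
        degree_lemma q hq hT hdisj (by omega)
      have hq1 : 1 ≤ q := hq ▸ Fintype.card_pos
      have hcard₁ : C₁.card + deg T C v + 1 = C.card := by
        have hsub : nbrs T C v ⊆ C.erase v := by
          intro w hw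
          rw [nbrs, Finset.mem_filter] at hw
          exact Finset.mem_erase.mpr ⟨hw.2.1, hw.1⟩
        have h3 := Finset.card_sdiff_of_subset hsub
        have h4 := Finset.card_erase_of_mem hv
        have h5 : (nbrs T C v).card ≤ (C.erase v).card := Finset.card_le_card hsub
        rw [hC₁, h3, h4]
        rw [deg]
        omega
      have hstep : 8 * q * C₁.card ≤ (8 * q - T.card) * C.card := by
        have h8 : T.card * C.card ≤ 8 * q * deg T C v := by
          calc T.card * C.card ≤ 4 * (q + 1) * deg T C v := hdeg
            _ ≤ 8 * q * deg T C v := Nat.mul_le_mul_right _ (by omega)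
        have hTle : T.card ≤ 8 * q := by omega
        zify [hTle]
        have e1 : (C₁.card : ℤ) = (C.card : ℤ) - (deg T C v : ℤ) - 1 := by
          have := congrArg (fun m : ℕ => (m : ℤ)) hcard₁
          push_cast at this
          linarith
        have e2 : (T.card : ℤ) * (C.card : ℤ) ≤ 8 * q * (deg T C v : ℤ) := by exact_mod_cast h8
        have hq0 : (0 : ℤ) ≤ 8 * (q : ℤ) := by positivity
        nlinarith [e1, e2]
      have hS := Finset.card_insert_le v (run q T M n C₁).1
      rcases k with _ | j
      · simpa using (by omega : 4 * q + 1 ≤ C.card)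
      · have hk₁ : j + 1 ≤ (run q T M n C₁).1.card := by
          have hS := Finset.card_insert_le v (run q T M n C₁).1
          omega
        have ihj := ih C₁ hdisj₁ j hk₁
        calc (4 * q + 1) * (8 * q) ^ (j + 1)
            = ((4 * q + 1) * (8 * q) ^ j) * (8 * q) := by ring
          _ ≤ ((8 * q - T.card) ^ j * C₁.card) * (8 * q) := Nat.mul_le_mul_right _ ihj
          _ = (8 * q - T.card) ^ j * (8 * q * C₁.card) := by ring
          _ ≤ (8 * q - T.card) ^ j * ((8 * q - T.card) * C.card) :=
              Nat.mul_le_mul_left _ hstep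
          _ = (8 * q - T.card) ^ (j + 1) * C.card := by ring
    · -- miss step
      have hne : C.Nonempty := Finset.card_pos.mp (by omega)
      have hv : pick T C ∈ C := (pick_spec hne).1
      have ihk := ih (C.erase (pick T C)) (fun x hx => hdisj x (Finset.mem_of_mem_erase hx)) k hk
      calc (4 * q + 1) * (8 * q) ^ k ≤ (8 * q - T.card) ^ k * (C.erase (pick T C)).card := ihk
        _ ≤ (8 * q - T.card) ^ k * C.card :=
            Nat.mul_le_mul_left _ (Finset.card_le_card (Finset.erase_subset _ _))

/-! ### Choosing the pivot set -/

noncomputable def TA (t₀ : ℕ) (A : Finset (F × F)) : Finset (F × F) :=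
  if h : t₀ ≤ A.card then (Finset.exists_subset_card_eq h).choose else ∅

lemma TA_spec {t₀ : ℕ} {A : Finset (F × F)} (h : t₀ ≤ A.card) :
    TA t₀ A ⊆ A ∧ (TA t₀ A).card = t₀ := by
  rw [TA, dif_pos h]
  exact (Finset.exists_subset_card_eq h).choose_spec

end Main

/-! ### The main counting bound -/

theorem main_bound (q : ℕ) (hq64 : 2 ^ 64 ≤ q) {F : Type} [Field F] [Fintype F]
    (hcard : Fintype.card F = q) :
    Nat.card {S : Finset (F × F) // IsCap S} < 2 ^ (6 * q) := by
  letI : LinearOrder (F × F) := LinearOrder.lift' (Fintype.equivFin (F × F)) (Equiv.injective _)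
  have h264 : (1 : ℕ) ≤ 2 ^ 64 := by norm_num
  have hq1 : 1 ≤ q := h264.trans hq64
  have hq0 : q ≠ 0 := by omega
  set L := Nat.log 2 q with hL
  set t₀ := (L + 1) ^ 3 with ht₀
  set fmax := (8 * q / t₀ + 1) * (2 * (L + 1)) with hfmax
  set fuel := q * q with hfuel
  have hL64 : 64 ≤ L := (Nat.le_log_iff_pow_le (by norm_num) hq0).mpr hq64
  have hLq : 2 ^ L ≤ q := Nat.pow_log_le_self 2 hq0
  have hqL : q < 2 ^ (L + 1) := Nat.lt_pow_succ_log_self (by norm_num) q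
  have hP5 : (L + 1) ^ 5 ≤ q := (pow5_le L hL64).trans hLq
  have ht₀q : t₀ ≤ q := by
    calc t₀ = (L + 1) ^ 3 := rfl
      _ ≤ (L + 1) ^ 5 := Nat.pow_le_pow_right (by omega) (by omega)
      _ ≤ q := hP5
  have ht₀pos : 0 < t₀ := by positivity
  have hqq1 : 1 ≤ q * q := by nlinarith
  have hqq2 : q * q ≤ 2 ^ (2 * (L + 1)) := by
    calc q * q ≤ 2 ^ (L + 1) * 2 ^ (L + 1) := Nat.mul_le_mul hqL.le hqL.le
      _ = 2 ^ (2 * (L + 1)) := by rw [← pow_add]; congr 1; ring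
  have hN : Fintype.card (F × F) = q * q := by rw [Fintype.card_prod, hcard]
  have hNcard : (Finset.univ : Finset (F × F)).card = q * q := by
    rw [Finset.card_univ, hN]
  -- AR1: the container-size contradiction inequality
  have hARb : 2 * (8 * q - t₀) ^ (8 * q / t₀ + 1) ≤ (8 * q) ^ (8 * q / t₀ + 1) := by
    have hxy : (8 * q - t₀) + t₀ = 8 * q := by omega
    have hlt : 8 * q < t₀ * (8 * q / t₀ + 1) := Nat.lt_mul_div_succ (8 * q) ht₀pos
    have hx_le : 8 * q - t₀ ≤ (8 * q / t₀ + 1) * t₀ := by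
      rw [mul_comm t₀ (8 * q / t₀ + 1)] at hlt; omega
    have hbin := bin_ineq (8 * q - t₀) t₀ (8 * q / t₀)
    rw [hxy] at hbin
    have hxb : (8 * q - t₀) ^ (8 * q / t₀ + 1)
        ≤ (8 * q / t₀ + 1) * t₀ * (8 * q - t₀) ^ (8 * q / t₀) := by
      calc (8 * q - t₀) ^ (8 * q / t₀ + 1)
          = (8 * q - t₀) * (8 * q - t₀) ^ (8 * q / t₀) := by ring
        _ ≤ ((8 * q / t₀ + 1) * t₀) * (8 * q - t₀) ^ (8 * q / t₀) :=
            Nat.mul_le_mul_right _ hx_le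
    omega
  have hAR1 : (8 * q - t₀) ^ fmax * (q * q) < (4 * q + 1) * (8 * q) ^ fmax := by
    have hpow : ((8 * q - t₀) ^ (8 * q / t₀ + 1) * 2) ^ (2 * (L + 1))
        ≤ ((8 * q) ^ (8 * q / t₀ + 1)) ^ (2 * (L + 1)) :=
      Nat.pow_le_pow_left (by omega) _
    rw [mul_pow, ← pow_mul, ← pow_mul] at hpow
    have h2pow : (2 : ℕ) ^ (2 * (L + 1)) ≥ q * q := hqq2
    have hone : 1 ≤ (8 * q) ^ fmax := Nat.one_le_pow _ _ (by omega)
    have hdouble : 2 * (8 * q) ^ fmax ≤ (4 * q + 1) * (8 * q) ^ fmax :=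
      Nat.mul_le_mul_right _ (by omega)
    have hmain : (8 * q - t₀) ^ fmax * (q * q) ≤ (8 * q) ^ fmax := by
      calc (8 * q - t₀) ^ fmax * (q * q)
          ≤ (8 * q - t₀) ^ fmax * 2 ^ (2 * (L + 1)) := Nat.mul_le_mul_left _ hqq2
        _ = (8 * q - t₀) ^ ((8 * q / t₀ + 1) * (2 * (L + 1))) * 2 ^ (2 * (L + 1)) := by
            rw [hfmax]
        _ ≤ (8 * q) ^ ((8 * q / t₀ + 1) * (2 * (L + 1))) := hpow
        _ = (8 * q) ^ fmax := by rw [hfmax]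
    omega
  -- translate Nat.card into a Finset count
  have hNatCard : Nat.card {S : Finset (F × F) // IsCap S}
      = ((Finset.univ : Finset (Finset (F × F))).filter (fun A => IsCap A)).card := by
    rw [Nat.card_eq_fintype_card]
    convert Fintype.card_subtype (fun A : Finset (F × F) => IsCap A)
  rw [hNatCard]
  set caps := (Finset.univ : Finset (Finset (F × F))).filter (fun A => IsCap A) with hcaps
  set big := caps.filter (fun A => t₀ ≤ A.card) with hbigdef
  set small := caps.filter (fun A => ¬ t₀ ≤ A.card) with hsmalldef
  have hsplit : big.card + small.card = caps.card :=
    Finset.card_filter_add_card_filter_not (s := caps) (p := fun A => t₀ ≤ A.card)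
  -- small caps
  have hsmall_le : small.card ≤ t₀ * (q * q) ^ t₀ := by
    have hsub : small ⊆ (Finset.range t₀).biUnion
        (fun j => Finset.powersetCard j (Finset.univ : Finset (F × F))) := by
      intro A hA
      rw [hsmalldef, Finset.mem_filter] at hA
      rw [Finset.mem_biUnion]
      exact ⟨A.card, Finset.mem_range.mpr (by omega),
        Finset.mem_powersetCard.mpr ⟨Finset.subset_univ A, rfl⟩⟩
    calc small.card ≤ _ := Finset.card_le_card hsub
      _ ≤ ∑ j ∈ Finset.range t₀,
          (Finset.powersetCard j (Finset.univ : Finset (F × F))).card :=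
          Finset.card_biUnion_le
      _ ≤ ∑ _j ∈ Finset.range t₀, (q * q) ^ t₀ := by
          apply Finset.sum_le_sum
          intro j hj
          rw [Finset.card_powersetCard, hNcard]
          calc (q * q).choose j ≤ (q * q) ^ j := Nat.choose_le_pow _ _
            _ ≤ (q * q) ^ t₀ :=
                Nat.pow_le_pow_right hqq1 (le_of_lt (Finset.mem_range.mp hj))
      _ = t₀ * (q * q) ^ t₀ := by rw [Finset.sum_const, Finset.card_range, smul_eq_mul]
  -- big caps
  have hC0fuel : ∀ T : Finset (F × F), ((Finset.univ : Finset (F × F)) \ T).card ≤ fuel := by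
    intro T
    calc ((Finset.univ : Finset (F × F)) \ T).card
        ≤ (Finset.univ : Finset (F × F)).card := Finset.card_le_card (Finset.sdiff_subset)
      _ = fuel := by rw [hNcard]
  have hmem : ∀ A ∈ big, IsCap A ∧ t₀ ≤ A.card := by
    intro A hA
    rw [hbigdef, Finset.mem_filter] at hA
    exact ⟨(Finset.mem_filter.mp hA.1).2, hA.2⟩
  -- reconstruction
  have hrecon : ∀ A : Finset (F × F), IsCap A → t₀ ≤ A.card →
      A = TA t₀ A ∪ (run q (TA t₀ A) A fuel (Finset.univ \ TA t₀ A)).1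
        ∪ (A ∩ (run q (TA t₀ A) A fuel (Finset.univ \ TA t₀ A)).2) := by
    intro A hA1 hA2
    obtain ⟨hTsub, hTcard⟩ := TA_spec hA2
    apply Finset.Subset.antisymm
    · intro a ha
      by_cases hT : a ∈ TA t₀ A
      · exact Finset.mem_union_left _ (Finset.mem_union_left _ hT)
      · have hin : a ∈ A ∩ (Finset.univ \ TA t₀ A) :=
          Finset.mem_inter.mpr ⟨ha, Finset.mem_sdiff.mpr ⟨Finset.mem_univ _, hT⟩⟩
        have hcov := run_cover q hA1 hTsub fuel _
          (fun x hx => (Finset.mem_sdiff.mp hx).2) hin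
        rcases Finset.mem_union.mp hcov with h | h
        · exact Finset.mem_union_left _ (Finset.mem_union_right _ h)
        · exact Finset.mem_union_right _ (Finset.mem_inter.mpr ⟨ha, h⟩)
    · refine Finset.union_subset (Finset.union_subset hTsub ?_) ?_
      · exact run_fst_subset q _ A fuel _
      · exact Finset.inter_subset_left
  -- fingerprint size
  have hScard : ∀ A : Finset (F × F), IsCap A → t₀ ≤ A.card →
      (run q (TA t₀ A) A fuel (Finset.univ \ TA t₀ A)).1.card ≤ fmax := by
    intro A hA1 hA2
    obtain ⟨hTsub, hTcard⟩ := TA_spec hA2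
    by_contra hcon
    push_neg at hcon
    have hfp := run_fingerprint q hcard (cap_subset hA1 hTsub)
      (by rw [hTcard]; omega) A fuel (Finset.univ \ TA t₀ A)
      (fun x hx => (Finset.mem_sdiff.mp hx).2) fmax (by omega)
    rw [hTcard] at hfp
    have hC0 : ((Finset.univ : Finset (F × F)) \ TA t₀ A).card ≤ q * q := hC0fuel _
    have hch : (8 * q - t₀) ^ fmax * ((Finset.univ : Finset (F × F)) \ TA t₀ A).card
        ≤ (8 * q - t₀) ^ fmax * (q * q) := Nat.mul_le_mul_left _ hC0
    omega
  -- the injective encoding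
  set Sall := (Finset.range (fmax + 1)).biUnion
    (fun j => Finset.powersetCard j (Finset.univ : Finset (F × F))) with hSall
  set pairs := (Finset.powersetCard t₀ (Finset.univ : Finset (F × F))) ×ˢ Sall with hpairs
  set B := pairs.biUnion (fun TS =>
    ((run q TS.1 TS.2 fuel ((Finset.univ : Finset (F × F)) \ TS.1)).2.powerset).image
      (fun X => (TS.1, TS.2, X))) with hB
  have hbig_le : big.card ≤ B.card := by
    apply Finset.card_le_card_of_injOn (fun A =>
      (TA t₀ A, (run q (TA t₀ A) A fuel (Finset.univ \ TA t₀ A)).1,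
        A ∩ (run q (TA t₀ A) A fuel (Finset.univ \ TA t₀ A)).2))
    · intro A hA
      obtain ⟨hA1, hA2⟩ := hmem A hA
      obtain ⟨hTsub, hTcard⟩ := TA_spec hA2
      rw [Finset.mem_coe, hB, Finset.mem_biUnion]
      refine ⟨(TA t₀ A, (run q (TA t₀ A) A fuel (Finset.univ \ TA t₀ A)).1), ?_, ?_⟩
      · rw [hpairs, Finset.mem_product]
        constructor
        · exact Finset.mem_powersetCard.mpr ⟨Finset.subset_univ _, hTcard⟩
        · rw [hSall, Finset.mem_biUnion]
          exact ⟨(run q (TA t₀ A) A fuel (Finset.univ \ TA t₀ A)).1.card,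
            Finset.mem_range.mpr (by
              have := hScard A hA1 hA2
              omega),
            Finset.mem_powersetCard.mpr ⟨Finset.subset_univ _, rfl⟩⟩
      · rw [Finset.mem_image]
        refine ⟨A ∩ (run q (TA t₀ A) A fuel (Finset.univ \ TA t₀ A)).2, ?_, rfl⟩
        rw [Finset.mem_powerset]
        dsimp only
        have hrep := run_replay q (TA t₀ A) fuel (Finset.univ \ TA t₀ A) A
        rw [hrep]
        exact Finset.inter_subset_right
    · intro A hA A' hA' heq
      obtain ⟨hA1, hA2⟩ := hmem A (by exact hA)
      obtain ⟨hA1', hA2'⟩ := hmem A' (by exact hA')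
      have h1 : TA t₀ A = TA t₀ A' := congrArg Prod.fst heq
      have h2 : (run q (TA t₀ A) A fuel (Finset.univ \ TA t₀ A)).1
          = (run q (TA t₀ A') A' fuel (Finset.univ \ TA t₀ A')).1 :=
        congrArg (fun p => p.2.1) heq
      have h3 : A ∩ (run q (TA t₀ A) A fuel (Finset.univ \ TA t₀ A)).2
          = A' ∩ (run q (TA t₀ A') A' fuel (Finset.univ \ TA t₀ A')).2 :=
        congrArg (fun p => p.2.2) heq
      rw [hrecon A hA1 hA2, hrecon A' hA1' hA2', h2, h3, h1]
  have hBcard : B.card ≤ (q * q) ^ t₀ * ((fmax + 1) * (q * q) ^ fmax) * 2 ^ (4 * q) := by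
    have hstep1 : B.card ≤ pairs.card * 2 ^ (4 * q) := by
      calc B.card ≤ ∑ TS ∈ pairs,
            (((run q TS.1 TS.2 fuel ((Finset.univ : Finset (F × F)) \ TS.1)).2.powerset).image
              (fun X => (TS.1, TS.2, X))).card := Finset.card_biUnion_le
        _ ≤ ∑ _TS ∈ pairs, 2 ^ (4 * q) := by
            apply Finset.sum_le_sum
            intro TS _
            calc (((run q TS.1 TS.2 fuel ((Finset.univ : Finset (F × F)) \ TS.1)).2.powerset).image
                  (fun X => (TS.1, TS.2, X))).card
                ≤ ((run q TS.1 TS.2 fuel ((Finset.univ : Finset (F × F)) \ TS.1)).2.powerset).card :=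
                  Finset.card_image_le
              _ = 2 ^ (run q TS.1 TS.2 fuel ((Finset.univ : Finset (F × F)) \ TS.1)).2.card :=
                  Finset.card_powerset _
              _ ≤ 2 ^ (4 * q) := Nat.pow_le_pow_right (by norm_num)
                  (run_snd_card q TS.1 TS.2 fuel _ (hC0fuel _))
        _ = pairs.card * 2 ^ (4 * q) := by rw [Finset.sum_const, smul_eq_mul]
    have hpairscard : pairs.card ≤ (q * q) ^ t₀ * ((fmax + 1) * (q * q) ^ fmax) := by
      rw [hpairs, Finset.card_product]
      apply Nat.mul_le_mul
      · rw [Finset.card_powersetCard, hNcard]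
        exact Nat.choose_le_pow _ _
      · calc Sall.card ≤ ∑ j ∈ Finset.range (fmax + 1),
              (Finset.powersetCard j (Finset.univ : Finset (F × F))).card :=
              Finset.card_biUnion_le
          _ ≤ ∑ _j ∈ Finset.range (fmax + 1), (q * q) ^ fmax := by
              apply Finset.sum_le_sum
              intro j hj
              rw [Finset.card_powersetCard, hNcard]
              calc (q * q).choose j ≤ (q * q) ^ j := Nat.choose_le_pow _ _
                _ ≤ (q * q) ^ fmax := Nat.pow_le_pow_right hqq1 (by
                    have := Finset.mem_range.mp hj; omega)
          _ = (fmax + 1) * (q * q) ^ fmax := by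
              rw [Finset.sum_const, Finset.card_range, smul_eq_mul]
    calc B.card ≤ pairs.card * 2 ^ (4 * q) := hstep1
      _ ≤ (q * q) ^ t₀ * ((fmax + 1) * (q * q) ^ fmax) * 2 ^ (4 * q) :=
          Nat.mul_le_mul_right _ hpairscard
  -- numeric wrap-up
  have hP4a : 8 * (L + 1) ^ 4 ≤ q := by
    calc 8 * (L + 1) ^ 4 ≤ (L + 1) * (L + 1) ^ 4 := Nat.mul_le_mul_right _ (by omega)
      _ = (L + 1) ^ 5 := by ring
      _ ≤ q := hP5
  have hp3 : 3 * ((L + 1) * fmax) ≤ q := by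
    have s0 : (8 * q / t₀) * t₀ ≤ 8 * q := Nat.div_mul_le_self _ _
    have s1 : (8 * q / t₀) * (L + 1) ^ 2 ≤ 8 * q / (L + 1) := by
      rw [Nat.le_div_iff_mul_le (by omega : 0 < L + 1)]
      calc (8 * q / t₀) * (L + 1) ^ 2 * (L + 1) = (8 * q / t₀) * t₀ := by
            rw [ht₀]; ring
        _ ≤ 8 * q := s0
    have s2 : 8 * q / (L + 1) ≤ 8 * q / 65 := Nat.div_le_div_left (by omega) (by norm_num)
    have s3 : (8 * q / 65) * 65 ≤ 8 * q := Nat.div_mul_le_self _ _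
    have s4 : 390 * (L + 1) ^ 2 ≤ 17 * q := by
      have h653 : (65 : ℕ) ^ 3 ≤ (L + 1) ^ 3 := Nat.pow_le_pow_left (by omega) 3
      calc 390 * (L + 1) ^ 2 ≤ (L + 1) ^ 3 * (L + 1) ^ 2 := by
            apply Nat.mul_le_mul_right
            norm_num at h653 ⊢
            omega
        _ = (L + 1) ^ 5 := by ring
        _ ≤ q := hP5
        _ ≤ 17 * q := by omega
    have hX : (8 * q / t₀) * (L + 1) ^ 2 ≤ 8 * q / 65 := s1.trans s2
    have h390X : 390 * ((8 * q / t₀) * (L + 1) ^ 2) ≤ 48 * q := by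
      calc 390 * ((8 * q / t₀) * (L + 1) ^ 2) ≤ 390 * (8 * q / 65) :=
            Nat.mul_le_mul_left _ hX
        _ = 6 * ((8 * q / 65) * 65) := by ring
        _ ≤ 6 * (8 * q) := Nat.mul_le_mul_left _ s3
        _ = 48 * q := by ring
    have e0 : (L + 1) * fmax = 2 * ((8 * q / t₀) * (L + 1) ^ 2) + 2 * (L + 1) ^ 2 := by
      rw [hfmax]; ring
    have goal65 : 65 * (3 * ((L + 1) * fmax)) ≤ 65 * q := by
      rw [e0]
      omega
    exact Nat.le_of_mul_le_mul_left goal65 (by norm_num)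
  have hfmle : fmax ≤ (L + 1) * fmax := by
    have : 1 * fmax ≤ (L + 1) * fmax := Nat.mul_le_mul_right _ (by omega)
    omega
  -- small part exponent
  have hsmall2 : small.card ≤ 2 ^ (6 * q - 2) := by
    have hs1 : small.card ≤ 2 ^ (t₀ + 2 * (L + 1) * t₀) := by
      calc small.card ≤ t₀ * (q * q) ^ t₀ := hsmall_le
        _ ≤ 2 ^ t₀ * (2 ^ (2 * (L + 1))) ^ t₀ :=
            Nat.mul_le_mul (Nat.lt_two_pow_self (n := t₀)).le (Nat.pow_le_pow_left hqq2 t₀)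
        _ = 2 ^ (t₀ + 2 * (L + 1) * t₀) := by rw [← pow_mul, ← pow_add]
    have hexp : t₀ + 2 * (L + 1) * t₀ ≤ 6 * q - 2 := by
      have e1 : 2 * (L + 1) * t₀ = 2 * (L + 1) ^ 4 := by rw [ht₀]; ring
      rw [e1]
      omega
    exact hs1.trans (Nat.pow_le_pow_right (by norm_num) hexp)
  -- big part exponent
  have hbig2 : big.card ≤ 2 ^ (6 * q - 2) := by
    have hb1 : big.card ≤ 2 ^ (2 * (L + 1) * t₀ + ((fmax + 1) + 2 * (L + 1) * fmax) + 4 * q) := by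
      calc big.card ≤ B.card := hbig_le
        _ ≤ (q * q) ^ t₀ * ((fmax + 1) * (q * q) ^ fmax) * 2 ^ (4 * q) := hBcard
        _ ≤ (2 ^ (2 * (L + 1))) ^ t₀ * (2 ^ (fmax + 1) * (2 ^ (2 * (L + 1))) ^ fmax)
              * 2 ^ (4 * q) := by
            apply Nat.mul_le_mul_right
            apply Nat.mul_le_mul
            · exact Nat.pow_le_pow_left hqq2 t₀
            · exact Nat.mul_le_mul (Nat.lt_two_pow_self (n := fmax + 1)).le
                (Nat.pow_le_pow_left hqq2 fmax)
        _ = 2 ^ (2 * (L + 1) * t₀ + ((fmax + 1) + 2 * (L + 1) * fmax) + 4 * q) := by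
            rw [← pow_mul, ← pow_mul, ← pow_add, ← pow_add, ← pow_add]
    have hexp : 2 * (L + 1) * t₀ + ((fmax + 1) + 2 * (L + 1) * fmax) + 4 * q ≤ 6 * q - 2 := by
      have e1 : 2 * (L + 1) * t₀ = 2 * (L + 1) ^ 4 := by rw [ht₀]; ring
      have e2 : 2 * (L + 1) * fmax = 2 * ((L + 1) * fmax) := by ring
      rw [e1, e2]
      omega
    exact hb1.trans (Nat.pow_le_pow_right (by norm_num) hexp)
  -- combine
  have hfinal : caps.card < 2 ^ (6 * q) := by
    have hsum : caps.card ≤ 2 ^ (6 * q - 2) + 2 ^ (6 * q - 2) := by omega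
    have heq2 : 2 ^ (6 * q - 2) + 2 ^ (6 * q - 2) = 2 ^ (6 * q - 1) := by
      rw [← two_mul, ← pow_succ']
      congr 1
      omega
    have hlt : (2 : ℕ) ^ (6 * q - 1) < 2 ^ (6 * q) :=
      Nat.pow_lt_pow_right (by norm_num) (by omega)
    omega
  exact hfinal

end Stmt10Aux

/-- There is `q₀` such that for every prime power `q ≥ q₀` and the finite field `F` with `q`
elements, the number of caps in the affine plane `F²` is less than `2^(6q)`. -/
theorem stmt10 :
    ∃ q₀ : ℕ, ∀ q : ℕ, q₀ ≤ q → IsPrimePow q →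
      ∀ (F : Type) [Field F] [Fintype F], Fintype.card F = q →
        Nat.card {S : Finset (F × F) // IsCap S} < 2 ^ (6 * q) := by
  refine ⟨2 ^ 64, fun q hq _ F _ _ hcard => ?_⟩
  exact Stmt10Aux.main_bound q hq hcard
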